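/- Let n ≥ 3 be an integer and p > 0. Define u_p : B₁ → ℝ on the unit ball B₁ ⊂ ℝⁿ by u_p(x) = 1 − |x|^{2/(1+p)}, and set A = (2/(1+p)) (2/(1+p) + n − 2). Then: (i) for every x ∈ B₁ with x ≠ 0, u_p is smooth near x and −Δu_p(x) = A (1 − u_p(x))^{−p}, i.e., u_p solves −Δu = f(u) away from the origin with f(t) = A(1−t)^{−p}, and f′(u_p(x)) = (2p/(1+p)) (2/(1+p) + n − 2) |x|^{−2}; (ii) if n ≥ N(p) := 2 + 4p/(1+p) + 4√(p/(1+p)), then u_p is stable, i.e., (2p/(1+p)) (2/(1+p) + n − 2) ∫_{B₁} ξ(x)² |x|^{−2} dx ≤ ∫_{B₁} |∇ξ(x)|² dx for every ξ ∈ C^∞_c(B₁). -/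

import Mathlib

set_option maxHeartbeats 1600000

open MeasureTheory Set Filter Topology Metric
open scoped ENNReal NNReal

/-- The Laplacian of `u : ℝⁿ → ℝ`, as the sum of second partial derivatives. -/
noncomputable def lap {n : ℕ} (u : EuclideanSpace ℝ (Fin n) → ℝ)
    (x : EuclideanSpace ℝ (Fin n)) : ℝ :=
  ∑ i, fderiv ℝ (fun y => fderiv ℝ u y (EuclideanSpace.single i 1)) x (EuclideanSpace.single i 1)

section aux

lemma aux_expNegInvGlue_mono : Monotone expNegInvGlue := by
  intro a b hab
  rcases le_total b 0 with hb | hb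
  · rw [expNegInvGlue.zero_of_nonpos (hab.trans hb), expNegInvGlue.zero_of_nonpos hb]
  rcases le_or_gt a 0 with ha | ha
  · rw [expNegInvGlue.zero_of_nonpos ha]; exact expNegInvGlue.nonneg b
  have hb' : 0 < b := lt_of_lt_of_le ha hab
  simp only [expNegInvGlue, if_neg (not_le.2 ha), if_neg (not_le.2 hb')]
  apply Real.exp_le_exp.2
  have : b⁻¹ ≤ a⁻¹ := by gcongr
  linarith

lemma aux_st_mono : Monotone Real.smoothTransition := by
  intro a b hab
  unfold Real.smoothTransition
  rw [div_le_div_iff₀ (Real.smoothTransition.pos_denom a) (Real.smoothTransition.pos_denom b)]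
  have h1 : expNegInvGlue a ≤ expNegInvGlue b := aux_expNegInvGlue_mono hab
  have h2 : expNegInvGlue (1 - b) ≤ expNegInvGlue (1 - a) := aux_expNegInvGlue_mono (by linarith)
  nlinarith [expNegInvGlue.nonneg a, expNegInvGlue.nonneg (1 - b)]

lemma aux_st_deriv_nonneg (t : ℝ) : 0 ≤ deriv Real.smoothTransition t := by
  have hd : DifferentiableAt ℝ Real.smoothTransition t :=
    (Real.smoothTransition.contDiff (n := 1)).differentiable (by simp) t
  have h := hd.hasDerivAt
  rw [hasDerivAt_iff_tendsto_slope] at h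
  have hsub : Ioi t ⊆ {t}ᶜ := fun y hy => ne_of_gt hy
  have h' := h.mono_left (nhdsWithin_mono t hsub)
  refine ge_of_tendsto h' ?_
  filter_upwards [self_mem_nhdsWithin] with y hy
  rw [slope_def_field]
  have : (0:ℝ) < y - t := sub_pos.2 hy
  exact div_nonneg (sub_nonneg.2 (aux_st_mono (le_of_lt hy))) this.le

variable {n : ℕ}
local notation "E" => EuclideanSpace ℝ (Fin n)

lemma aux_integral_fderiv_zero {f : E → ℝ} (hf : ContDiff ℝ (⊤:ℕ∞) f)
    (hsupp : HasCompactSupport f) (v : E) : ∫ x : E, fderiv ℝ f x v = 0 := by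
  have hder : Continuous (fun x : E => fderiv ℝ f x v) :=
    (hf.continuous_fderiv (by simp)).clm_apply continuous_const
  have hdsupp : HasCompactSupport (fun x : E => fderiv ℝ f x v) :=
    (hsupp.fderiv ℝ).comp_left (g := fun L : E →L[ℝ] ℝ => L v) rfl
  have h1 : Integrable (fun x : E => fderiv ℝ f x v * f x) volume := by
    exact (hder.mul hf.continuous).integrable_of_hasCompactSupport (hdsupp.mul_right)
  have key := integral_mul_fderiv_eq_neg_fderiv_mul_of_integrable
    (f := fun _ : E => (1:ℝ)) (g := f) (v := v) (μ := volume)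
    ?_ ?_ ?_ (fun x _ => differentiableAt_const 1) (fun x _ => hf.differentiable (by simp) x)
  · simpa using key
  · simp [fderiv_const]
  · simpa using hder.integrable_of_hasCompactSupport hdsupp
  · simpa using hf.continuous.integrable_of_hasCompactSupport hsupp

lemma aux_rpow_eq (x : E) : ‖x‖ ^ (-(2:ℝ)) = ((‖x‖:ℝ) ^ 2)⁻¹ := by
  rw [Real.rpow_neg (norm_nonneg x), ← Real.rpow_natCast ‖x‖ 2]
  norm_num

lemma aux_kernel_integrable (hn : 3 ≤ n) :
    IntegrableOn (fun x : E => ‖x‖ ^ (-(2:ℝ))) (ball (0:E) 1) volume := by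
  have hne : Nonempty (Fin n) := ⟨⟨0, by omega⟩⟩
  have hnt : Nontrivial E := ⟨EuclideanSpace.single (Classical.arbitrary (Fin n)) (1:ℝ), 0, by
    intro h
    have := congrArg (fun z => z (Classical.arbitrary (Fin n))) h
    simpa using this⟩
  constructor
  · exact (measurable_norm.pow_const _).inv.aestronglyMeasurable.congr
      (by filter_upwards with x using (aux_rpow_eq x).symm)
  · rw [hasFiniteIntegral_def]
    set A : ℕ → Set (EuclideanSpace ℝ (Fin n)) :=
      fun k => closedBall (0:E) ((2:ℝ)⁻¹ ^ k) \ closedBall (0:E) ((2:ℝ)⁻¹ ^ (k+1)) with hA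
    have hcover : ball (0:E) 1 ⊆ {(0:E)} ∪ ⋃ k : ℕ, A k := by
      intro x hx
      rcases eq_or_ne x 0 with rfl | hx0
      · exact Or.inl rfl
      right
      have hxpos : 0 < ‖x‖ := norm_pos_iff.2 hx0
      have hxlt : ‖x‖ < 1 := by simpa [mem_ball, dist_eq_norm] using hx
      have hex : ∃ m : ℕ, (2:ℝ)⁻¹ ^ m < ‖x‖ := by
        obtain ⟨m, hm⟩ := exists_pow_lt_of_lt_one hxpos (by norm_num : (2:ℝ)⁻¹ < 1)
        exact ⟨m, hm⟩
      set m := Nat.find hex with hm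
      have hspec : (2:ℝ)⁻¹ ^ m < ‖x‖ := Nat.find_spec hex
      have hm0 : m ≠ 0 := by
        intro h
        rw [h] at hspec
        simp at hspec
        linarith
      obtain ⟨k, hk⟩ : ∃ k, m = k + 1 := ⟨m - 1, by omega⟩
      rw [hk] at hspec
      have hmin : ¬ ((2:ℝ)⁻¹ ^ k < ‖x‖) := Nat.find_min hex (by omega)
      refine mem_iUnion.2 ⟨k, ?_, ?_⟩
      · simpa [mem_closedBall, dist_eq_norm] using not_lt.1 hmin
      · simpa [mem_closedBall, dist_eq_norm] using hspec
    calc ∫⁻ x in ball (0:E) 1, ‖‖x‖ ^ (-(2:ℝ))‖₊ ∂volume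
        ≤ ∫⁻ x in {(0:E)} ∪ ⋃ k : ℕ, A k, ‖‖x‖ ^ (-(2:ℝ))‖₊ ∂volume := by
          exact lintegral_mono_set hcover
      _ ≤ (∫⁻ x in {(0:E)}, ‖‖x‖ ^ (-(2:ℝ))‖₊ ∂volume)
            + ∫⁻ x in ⋃ k : ℕ, A k, ‖‖x‖ ^ (-(2:ℝ))‖₊ ∂volume := by
          refine (lintegral_mono' (Measure.restrict_union_le _ _) le_rfl).trans ?_
          rw [lintegral_add_measure]
      _ ≤ 0 + ∑' k : ℕ, ∫⁻ x in A k, ‖‖x‖ ^ (-(2:ℝ))‖₊ ∂volume := by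
          gcongr
          · have : (volume : Measure (EuclideanSpace ℝ (Fin n))) {(0:E)} = 0 := measure_singleton 0
            rw [setLIntegral_measure_zero _ _ this]
          · exact lintegral_iUnion_le _ _
      _ = ∑' k : ℕ, ∫⁻ x in A k, ‖‖x‖ ^ (-(2:ℝ))‖₊ ∂volume := by rw [zero_add]
      _ ≤ ∑' k : ℕ, (ENNReal.ofReal 2⁻¹)^k * (ENNReal.ofReal 4 * volume (ball (0:E) 1)) := by
          refine ENNReal.tsum_le_tsum fun k => ?_
          have hr2 : (0:ℝ) < (2:ℝ)⁻¹ ^ (k+1) := by positivity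
          have hbound : ∀ x ∈ A k,
              (‖‖x‖ ^ (-(2:ℝ))‖₊ : ENNReal) ≤ ENNReal.ofReal ((((2:ℝ)⁻¹ ^ (k+1))^2)⁻¹) := by
            intro x hx
            have hx1 : (2:ℝ)⁻¹ ^ (k+1) < ‖x‖ := by
              have := hx.2
              simpa [mem_closedBall, dist_eq_norm, not_le] using this
            have hfx : (0:ℝ) ≤ ‖x‖ ^ (-(2:ℝ)) := Real.rpow_nonneg (norm_nonneg x) _
            rw [← enorm_eq_nnnorm, Real.enorm_eq_ofReal hfx, aux_rpow_eq]
            apply ENNReal.ofReal_le_ofReal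
            have h2 : (0:ℝ) < ((2:ℝ)⁻¹ ^ (k+1))^2 := by positivity
            apply inv_anti₀ h2
            have := hx1.le
            nlinarith [norm_nonneg x]
          calc ∫⁻ x in A k, ‖‖x‖ ^ (-(2:ℝ))‖₊ ∂volume
              ≤ ∫⁻ _ in A k, ENNReal.ofReal ((((2:ℝ)⁻¹ ^ (k+1))^2)⁻¹) ∂volume :=
                setLIntegral_mono measurable_const hbound
            _ = ENNReal.ofReal ((((2:ℝ)⁻¹ ^ (k+1))^2)⁻¹) * volume (A k) := setLIntegral_const _ _
            _ ≤ ENNReal.ofReal ((((2:ℝ)⁻¹ ^ (k+1))^2)⁻¹) *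
                  (ENNReal.ofReal (((2:ℝ)⁻¹ ^ k)^n) * volume (ball (0:E) 1)) := by
                gcongr
                have h1 : volume (A k) ≤ volume (closedBall (0:E) ((2:ℝ)⁻¹ ^ k)) :=
                  measure_mono diff_subset
                rwa [Measure.addHaar_closedBall _ _ (by positivity),
                  finrank_euclideanSpace_fin] at h1
            _ = ENNReal.ofReal (((((2:ℝ)⁻¹ ^ (k+1))^2)⁻¹ * ((2:ℝ)⁻¹ ^ k)^n)) *
                  volume (ball (0:E) 1) := by
                rw [ENNReal.ofReal_mul (by positivity), mul_assoc]
            _ ≤ ENNReal.ofReal ((2:ℝ)⁻¹ ^ k * 4) * volume (ball (0:E) 1) := by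
                refine mul_le_mul_left (ENNReal.ofReal_le_ofReal ?_) _
                have e1 : (((2:ℝ)⁻¹ ^ (k+1))^2)⁻¹ = 4 * 4^k := by
                  rw [← pow_mul, ← inv_pow, inv_inv,
                    show (k+1)*2 = 2 + k*2 by ring, pow_add, pow_mul]
                  norm_num
                  rw [← pow_mul, Nat.mul_comm k 2, pow_mul]
                  norm_num
                have e2 : (4:ℝ) * 4^k * ((2:ℝ)⁻¹ ^ k)^n = 4 * ((4 * (2:ℝ)⁻¹ ^ n))^k := by
                  rw [mul_pow]
                  simp only [← pow_mul, Nat.mul_comm k n]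
                  ring
                rw [e1, e2]
                have h3 : (4:ℝ) * (2:ℝ)⁻¹ ^ n ≤ 2⁻¹ := by
                  have : ((2:ℝ)⁻¹) ^ n ≤ (2:ℝ)⁻¹ ^ 3 :=
                    pow_le_pow_of_le_one (by norm_num) (by norm_num) hn
                  nlinarith
                have h4 : ((4:ℝ) * (2:ℝ)⁻¹ ^ n)^k ≤ ((2:ℝ)⁻¹)^k :=
                  pow_le_pow_left₀ (by positivity) h3 k
                nlinarith [pow_nonneg (show (0:ℝ) ≤ 2⁻¹ by norm_num) k]
            _ = (ENNReal.ofReal 2⁻¹)^k * (ENNReal.ofReal 4 * volume (ball (0:E) 1)) := by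
                rw [ENNReal.ofReal_mul (by positivity), ← ENNReal.ofReal_pow (by norm_num),
                  mul_assoc]
      _ = (1 - ENNReal.ofReal 2⁻¹)⁻¹ * (ENNReal.ofReal 4 * volume (ball (0:E) 1)) := by
          rw [ENNReal.tsum_mul_right, ENNReal.tsum_geometric]
      _ < ⊤ := by
          have hV : volume (ball (0:E) 1) < ⊤ := measure_ball_lt_top
          have h12 : ENNReal.ofReal (2⁻¹:ℝ) = 2⁻¹ := by
            rw [ENNReal.ofReal_inv_of_pos (by norm_num)]
            norm_num
          rw [h12]
          have : (1:ℝ≥0∞) - 2⁻¹ = 2⁻¹ := by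
            rw [ENNReal.sub_eq_of_eq_add (by norm_num)]
            rw [ENNReal.inv_two_add_inv_two]
          rw [this]
          refine ENNReal.mul_lt_top (by norm_num) (ENNReal.mul_lt_top ENNReal.ofReal_lt_top hV)

lemma aux_hasFDerivAt_normsq_rpow (c : ℝ) {x : E} (hx : x ≠ 0) :
    HasFDerivAt (fun y : E => ((‖y‖:ℝ)^2) ^ c)
      ((2 * c * ((‖x‖:ℝ)^2) ^ (c-1)) • innerSL ℝ x) x := by
  have hxn : ‖x‖ ≠ 0 := norm_ne_zero_iff.2 hx
  have hQ : HasFDerivAt (fun y : E => (‖y‖:ℝ)^2) ((2:ℕ) • innerSL ℝ x) x :=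
    (hasStrictFDerivAt_norm_sq x).hasFDerivAt
  have h1 : HasDerivAt (fun t : ℝ => t ^ c) (c * ((‖x‖:ℝ)^2) ^ (c-1)) ((‖x‖:ℝ)^2) :=
    Real.hasDerivAt_rpow_const (Or.inl (by positivity))
  have h2 := h1.comp_hasFDerivAt x hQ
  have h3 : (c * ((‖x‖:ℝ)^2) ^ (c-1)) • ((2:ℕ) • innerSL ℝ x)
      = (2 * c * ((‖x‖:ℝ)^2) ^ (c-1)) • innerSL ℝ x := by
    ext v
    simp [smul_smul]
    ring
  rw [h3] at h2
  exact h2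

lemma aux_sum_sq (x : E) : ∑ i, (x i)^2 = ‖x‖^2 := by
  rw [EuclideanSpace.norm_eq, Real.sq_sqrt (by positivity)]
  simp [Real.norm_eq_abs, sq_abs]

lemma part_one (hn : 3 ≤ n) (p : ℝ) (hp : 0 < p) (x : E) (hx : x ≠ 0) :
      ContDiffAt ℝ (⊤:ℕ∞) (fun y : E => 1 - ‖y‖ ^ (2 / (1 + p))) x ∧
      -lap (fun y : E => 1 - ‖y‖ ^ (2 / (1 + p))) x =
        (2 / (1 + p)) * (2 / (1 + p) + (n:ℝ) - 2) *
          (1 - (1 - ‖x‖ ^ (2 / (1 + p)))) ^ (-p) ∧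
      (2 / (1 + p)) * (2 / (1 + p) + (n:ℝ) - 2) * p *
          (1 - (1 - ‖x‖ ^ (2 / (1 + p)))) ^ (-(p + 1)) =
        (2 * p / (1 + p)) * (2 / (1 + p) + (n:ℝ) - 2) * ‖x‖ ^ (-(2:ℝ)) := by
  have hp1 : (0:ℝ) < 1 + p := by linarith
  have hxn : ‖x‖ ≠ 0 := norm_ne_zero_iff.2 hx
  have hxpos : (0:ℝ) < ‖x‖ := norm_pos_iff.2 hx
  have hQpos : (0:ℝ) < ‖x‖^2 := by positivity
  set β : ℝ := 1/(1+p) with hβ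
  have hβpos : 0 < β := by positivity
  have h_eq : ∀ y : E, ‖y‖ ^ (2/(1+p)) = ((‖y‖:ℝ)^2) ^ β := by
    intro y
    rw [← Real.rpow_natCast ‖y‖ 2, ← Real.rpow_mul (norm_nonneg y)]
    congr 1
    push_cast
    rw [hβ]; ring
  refine ⟨?_, ?_, ?_⟩
  · exact contDiffAt_const.sub
      ((contDiffAt_id.norm ℝ hx).rpow_const_of_ne hxn)
  · -- the Laplacian computation
    have hfun : (fun y : E => 1 - ‖y‖ ^ (2/(1+p))) = (fun y : E => 1 - ((‖y‖:ℝ)^2) ^ β) :=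
      funext fun y => by rw [h_eq y]
    rw [hfun]
    set m : E → ℝ := fun y => 2 * β * ((‖y‖:ℝ)^2) ^ (β-1) with hm
    have hlap : lap (fun y : E => 1 - ((‖y‖:ℝ)^2) ^ β) x
        = ∑ i : Fin n, fderiv ℝ (fun y : E => -(m y * y i)) x (EuclideanSpace.single i 1) := by
      unfold lap
      refine Finset.sum_congr rfl fun i _ => ?_
      have hEv : (fun y : E => fderiv ℝ (fun z : E => 1 - ((‖z‖:ℝ)^2) ^ β) y
          (EuclideanSpace.single i 1)) =ᶠ[𝓝 x] (fun y : E => -(m y * y i)) := by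
        have hmem : ∀ᶠ y in 𝓝 x, y ∈ ({0}ᶜ : Set (EuclideanSpace ℝ (Fin n))) :=
          isOpen_compl_singleton.eventually_mem hx
        filter_upwards [hmem] with y hy
        have hy0 : y ≠ 0 := hy
        have hgy := aux_hasFDerivAt_normsq_rpow β hy0
        have huy : HasFDerivAt (fun z : E => 1 - ((‖z‖:ℝ)^2) ^ β)
            (-((2 * β * ((‖y‖:ℝ)^2) ^ (β-1)) • innerSL ℝ y)) y := by
          have h := (hasFDerivAt_const (1:ℝ) y).sub hgy; rwa [zero_sub] at h
        rw [huy.fderiv]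
        simp [hm, EuclideanSpace.inner_single_right]
      rw [hEv.fderiv_eq]
    rw [hlap]
    have hDi : ∀ i : Fin n, fderiv ℝ (fun y : E => -(m y * y i)) x (EuclideanSpace.single i 1)
        = -(m x + (2*(2*β)*(β-1)*((‖x‖:ℝ)^2)^(β-1-1)) * (x i)^2) := by
      intro i
      have hmx : HasFDerivAt m ((2*β) • ((2 * (β-1) * ((‖x‖:ℝ)^2) ^ (β-1-1)) • innerSL ℝ x)) x := by
        have := (aux_hasFDerivAt_normsq_rpow (β-1) hx).const_mul (2*β)
        simpa [hm] using this
      have hcoord : HasFDerivAt (fun y : E => y i) (EuclideanSpace.proj (𝕜 := ℝ) i) x :=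
        (EuclideanSpace.proj (𝕜 := ℝ) i).hasFDerivAt
      have hprod := (hmx.mul hcoord).neg
      rw [show (fun y : E => -(m y * y i)) = -(m * fun y : E => y i) from rfl, hprod.fderiv]
      simp [EuclideanSpace.inner_single_right, PiLp.proj_apply, EuclideanSpace.single_apply]
      ring
    rw [Finset.sum_congr rfl fun i _ => hDi i]
    have e5 : ((‖x‖:ℝ)^2)^(β-1-1) * ‖x‖^2 = ((‖x‖:ℝ)^2)^(β-1) := by
      conv_rhs => rw [show β-1 = (β-1-1)+1 by ring, Real.rpow_add_one (ne_of_gt hQpos)]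
    have hsum2 : ∑ i : Fin n, -(m x + (2*(2*β)*(β-1)*((‖x‖:ℝ)^2)^(β-1-1)) * (x i)^2)
        = -((n:ℝ) * m x + (2*(2*β)*(β-1)) * ((‖x‖:ℝ)^2)^(β-1)) := by
      rw [Finset.sum_neg_distrib, Finset.sum_add_distrib, Finset.sum_const, ← Finset.mul_sum,
        aux_sum_sq, Finset.card_univ, Fintype.card_fin, nsmul_eq_mul]
      rw [mul_assoc (2*(2*β)*(β-1)), e5]
    rw [hsum2, neg_neg]
    have hbase : 1 - (1 - ‖x‖ ^ (2/(1+p))) = ((‖x‖:ℝ)^2)^β := by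
      rw [sub_sub_cancel, h_eq]
    rw [hbase]
    have e6 : (((‖x‖:ℝ)^2)^β)^(-p) = ((‖x‖:ℝ)^2)^(β-1) := by
      rw [← Real.rpow_mul (le_of_lt hQpos)]
      congr 1
      rw [hβ]
      field_simp
      ring
    rw [e6]
    have h2β : 2/(1+p) = 2*β := by rw [hβ]; ring
    rw [h2β]
    simp only [hm]
    ring
  · rw [sub_sub_cancel]
    have hp1' : (1:ℝ) + p ≠ 0 := ne_of_gt hp1
    have e7 : ((‖x‖:ℝ) ^ (2/(1+p))) ^ (-(p+1)) = ‖x‖ ^ (-(2:ℝ)) := by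
      rw [← Real.rpow_mul (norm_nonneg x)]
      congr 1
      field_simp
      ring
    rw [e7]
    ring

lemma aux_integrable_fderiv_apply {f : E → ℝ} (hf : ContDiff ℝ (⊤:ℕ∞) f)
    (hsupp : HasCompactSupport f) (v : E) :
    Integrable (fun x : E => fderiv ℝ f x v) volume := by
  have hder : Continuous (fun x : E => fderiv ℝ f x v) :=
    (hf.continuous_fderiv (by simp)).clm_apply continuous_const
  have hdsupp : HasCompactSupport (fun x : E => fderiv ℝ f x v) :=
    (hsupp.fderiv ℝ).comp_left (g := fun L : E →L[ℝ] ℝ => L v) rfl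
  exact hder.integrable_of_hasCompactSupport hdsupp

lemma aux_sum_single (x : E) : ∑ i : Fin n, x i • EuclideanSpace.single i (1:ℝ) = x := by
  ext j
  simp [EuclideanSpace.single_apply, Pi.single_apply]

lemma aux_core (hn : 3 ≤ n) {ξ : E → ℝ} (hξ : ContDiff ℝ (⊤:ℕ∞) ξ)
    (hcs : HasCompactSupport ξ) {t : ℝ} (ht : 0 < t) :
    (((n:ℝ)-2)/2)^2 *
        ∫ x : E, Real.smoothTransition (t * ‖x‖^2 - 1) * ξ x^2 * (((‖x‖:ℝ)^2)⁻¹)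
      ≤ ∫ x : E, ‖gradient ξ x‖^2 := by
  have hξdiff : Differentiable ℝ ξ := hξ.differentiable (by simp)
  set lam : ℝ := ((n:ℝ)-2)/2 with hlam
  have hlamnn : 0 ≤ lam := by
    rw [hlam]
    have : (3:ℝ) ≤ (n:ℝ) := by exact_mod_cast hn
    linarith
  set χ : E → ℝ := fun y => Real.smoothTransition (t * ‖y‖^2 - 1) with hχdef
  set ρ : E → ℝ := fun y => lam * χ y * ξ y^2 * (((‖y‖:ℝ)^2)⁻¹) with hρdef
  set Z : Set (EuclideanSpace ℝ (Fin n)) := {y : EuclideanSpace ℝ (Fin n) | t * ‖y‖^2 < 1}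
    with hZdef
  have hZopen : IsOpen Z := isOpen_lt (by fun_prop) continuous_const
  have hχ0 : ∀ y ∈ Z, χ y = 0 := fun y hy =>
    Real.smoothTransition.zero_of_nonpos (by simp only [hZdef, mem_setOf_eq] at hy; linarith)
  have hρ0 : ∀ y ∈ Z, ρ y = 0 := fun y hy => by simp [hρdef, hχ0 y hy]
  have hne' : ∀ y : EuclideanSpace ℝ (Fin n), y ∉ Z → y ≠ 0 := by
    intro y hy h0
    apply hy
    simp [hZdef, h0, ht]
  have hχcont : Continuous χ := Real.smoothTransition.continuous.comp (by fun_prop)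
  have hχsmooth : ContDiff ℝ (⊤:ℕ∞) χ :=
    Real.smoothTransition.contDiff.comp
      (((contDiff_const.mul (contDiff_norm_sq ℝ)).sub contDiff_const))
  have hρsmooth : ContDiff ℝ (⊤:ℕ∞) ρ := by
    rw [contDiff_iff_contDiffAt]
    intro y
    by_cases hy : y ∈ Z
    · exact contDiffAt_const.congr_of_eventuallyEq
        (((hZopen.eventually_mem hy).mono fun z hz => hρ0 z hz))
    · have hy0 : y ≠ 0 := hne' y hy
      have hQ : ((‖y‖:ℝ)^2) ≠ 0 := pow_ne_zero 2 (norm_ne_zero_iff.2 hy0)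
      exact ((contDiffAt_const.mul hχsmooth.contDiffAt).mul
        (hξ.contDiffAt.pow 2)).mul ((contDiff_norm_sq ℝ).contDiffAt.inv hQ)
  have hρsupp : HasCompactSupport ρ := by
    refine HasCompactSupport.intro hcs fun y hy => ?_
    have : ξ y = 0 := image_eq_zero_of_notMem_tsupport hy
    simp [hρdef, this]
  set F : Fin n → EuclideanSpace ℝ (Fin n) → ℝ := fun i y => ρ y * y i with hFdef
  have hFsmooth : ∀ i, ContDiff ℝ (⊤:ℕ∞) (F i) := fun i =>
    hρsmooth.mul (EuclideanSpace.proj (𝕜 := ℝ) i).contDiff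
  have hFsupp : ∀ i, HasCompactSupport (F i) := fun i => by
    refine HasCompactSupport.intro hρsupp fun y hy => ?_
    have : ρ y = 0 := image_eq_zero_of_notMem_tsupport hy
    simp [hFdef, this]
  -- divergence integrates to zero
  have hdiv : ∫ x : E, (∑ i : Fin n, fderiv ℝ (F i) x (EuclideanSpace.single i 1)) = 0 := by
    rw [integral_finset_sum _ (fun i _ => aux_integrable_fderiv_apply (hFsmooth i) (hFsupp i) _)]
    simp [aux_integral_fderiv_zero (hFsmooth _) (hFsupp _)]
  -- pointwise inequality
  have hpt : ∀ x : EuclideanSpace ℝ (Fin n), lam^2 * (χ x * ξ x^2 * (((‖x‖:ℝ)^2)⁻¹))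
      ≤ χ x * ‖gradient ξ x‖^2
        + ∑ i : Fin n, fderiv ℝ (F i) x (EuclideanSpace.single i 1) := by
    intro x
    by_cases hxZ : x ∈ Z
    · have hD0 : ∀ i : Fin n, fderiv ℝ (F i) x (EuclideanSpace.single i 1) = 0 := by
        intro i
        have hEv : (F i) =ᶠ[𝓝 x] (fun _ => (0:ℝ)) :=
          (hZopen.eventually_mem hxZ).mono fun z hz => by simp [hFdef, hρ0 z hz]
        rw [hEv.fderiv_eq, fderiv_fun_const]
        simp
      simp only [hχ0 x hxZ, hD0, Finset.sum_const_zero, zero_mul, mul_zero, add_zero, zero_add,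
        mul_comm]
      simp
    · have hx0 : x ≠ 0 := hne' x hxZ
      have hQpos : (0:ℝ) < ‖x‖^2 := pow_pos (norm_pos_iff.2 hx0) 2
      have hQne : ((‖x‖:ℝ)^2) ≠ 0 := ne_of_gt hQpos
      have hQ : HasFDerivAt (fun y : EuclideanSpace ℝ (Fin n) => (‖y‖:ℝ)^2)
          ((2:ℕ) • innerSL ℝ x) x := (hasStrictFDerivAt_norm_sq x).hasFDerivAt
      have harg : HasFDerivAt (fun y : EuclideanSpace ℝ (Fin n) => t * ‖y‖^2 - 1)
          (t • ((2:ℕ) • innerSL ℝ x)) x := by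
        simpa using (hQ.const_mul t).sub_const 1
      set ψ' : ℝ := deriv Real.smoothTransition (t * ‖x‖^2 - 1) with hψdef
      have hst : HasDerivAt Real.smoothTransition ψ' (t * ‖x‖^2 - 1) :=
        (((Real.smoothTransition.contDiff (n := 1)).differentiable (by simp)) _).hasDerivAt
      have hχx : HasFDerivAt χ (ψ' • (t • ((2:ℕ) • innerSL ℝ x))) x :=
        by rw [hχdef]; exact hst.comp_hasFDerivAt x harg
      have hξx : HasFDerivAt ξ (fderiv ℝ ξ x) x := (hξdiff x).hasFDerivAt
      have hξsq : HasFDerivAt (fun y => ξ y^2)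
          (ξ x • fderiv ℝ ξ x + ξ x • fderiv ℝ ξ x) x := by
        have h := hξx.mul hξx; simp only [sq]; exact h
      have hinv : HasFDerivAt (fun y : EuclideanSpace ℝ (Fin n) => (((‖y‖:ℝ)^2)⁻¹))
          ((-(((‖x‖:ℝ)^2)^2)⁻¹) • ((2:ℕ) • innerSL ℝ x)) x :=
        (hasDerivAt_inv hQne).comp_hasFDerivAt x hQ
      have h1 : HasFDerivAt (fun y => lam * χ y)
          (lam • (ψ' • (t • ((2:ℕ) • innerSL ℝ x)))) x := hχx.const_mul lam
      have h2 := h1.mul hξsq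
      have h3 : HasFDerivAt ρ _ x := h2.mul hinv
      have hFix : ∀ i : Fin n, fderiv ℝ (F i) x (EuclideanSpace.single i 1)
          = ρ x * (EuclideanSpace.single i (1:ℝ) i)
            + x i * (fderiv ℝ ρ x (EuclideanSpace.single i 1)) := by
        intro i
        have hcoord : HasFDerivAt (fun y : EuclideanSpace ℝ (Fin n) => y i)
            (EuclideanSpace.proj (𝕜 := ℝ) i) x := (EuclideanSpace.proj (𝕜 := ℝ) i).hasFDerivAt
        have hFi := h3.mul hcoord
        rw [show F i = (ρ * fun y => y i) from rfl, hFi.fderiv, ← h3.fderiv]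
        simp [PiLp.proj_apply, EuclideanSpace.single_apply]
      have hsum : ∑ i : Fin n, fderiv ℝ (F i) x (EuclideanSpace.single i 1)
          = (n:ℝ) * ρ x + fderiv ℝ ρ x x := by
        rw [Finset.sum_congr rfl fun i _ => hFix i, Finset.sum_add_distrib]
        congr 1
        · simp [EuclideanSpace.single_apply, Finset.card_univ, mul_comm]
        · have he : ∀ i : Fin n, x i * fderiv ℝ ρ x (EuclideanSpace.single i 1)
              = fderiv ℝ ρ x (x i • EuclideanSpace.single i 1) := fun i => by simp
          rw [Finset.sum_congr rfl fun i _ => he i, ← map_sum, aux_sum_single]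
      have hρval : fderiv ℝ ρ x x
          = -(2*lam*χ x*ξ x^2*(((‖x‖:ℝ)^2)⁻¹))
            + 2*lam*χ x*ξ x*(fderiv ℝ ξ x x)*(((‖x‖:ℝ)^2)⁻¹)
            + 2*lam*t*ψ'*ξ x^2 := by
        rw [h3.fderiv]
        simp only [ContinuousLinearMap.add_apply, ContinuousLinearMap.smul_apply,
          smul_eq_mul, innerSL_apply_apply, real_inner_self_eq_norm_sq, nsmul_eq_mul,
          ContinuousLinearMap.coe_smul', Pi.smul_apply, pow_one, Nat.cast_ofNat, Pi.mul_apply]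
        field_simp
        ring
      have hgradAt := (hξdiff x).hasGradientAt
      have hfg : fderiv ℝ ξ x x = inner ℝ (gradient ξ x) x := by
        rw [hgradAt.hasFDerivAt.fderiv, InnerProductSpace.toDual_apply_apply]
      have hsmnorm : ‖(lam * ξ x * (((‖x‖:ℝ)^2)⁻¹)) • x‖^2
          = (lam * ξ x * (((‖x‖:ℝ)^2)⁻¹))^2 * ‖x‖^2 := by
        rw [norm_smul, mul_pow, Real.norm_eq_abs, sq_abs]
      have key : (0:ℝ) ≤ χ x *
          ‖gradient ξ x + (lam * ξ x * (((‖x‖:ℝ)^2)⁻¹)) • x‖^2 :=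
        mul_nonneg (Real.smoothTransition.nonneg _) (sq_nonneg _)
      rw [norm_add_sq_real, real_inner_smul_right, hsmnorm] at key
      have hQQi : (lam * ξ x * (((‖x‖:ℝ)^2)⁻¹))^2 * ‖x‖^2
          = lam^2 * ξ x^2 * (((‖x‖:ℝ)^2)⁻¹) := by
        field_simp
      rw [hQQi] at key
      have hψnn : 0 ≤ ψ' := aux_st_deriv_nonneg _
      have hψterm : 0 ≤ 2*lam*t*ψ'*ξ x^2 := by positivity
      have hn2 : (n:ℝ) = 2*lam + 2 := by rw [hlam]; ring
      rw [hsum, hρval, hfg, hn2]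
      simp only [hρdef]
      linarith [key, hψterm]
  -- continuity and integrability
  have hcontQi : Continuous (fun x : EuclideanSpace ℝ (Fin n) =>
      χ x * ξ x^2 * (((‖x‖:ℝ)^2)⁻¹)) := by
    rw [continuous_iff_continuousAt]
    intro y
    by_cases hy : y ∈ Z
    · have hev : (fun z : EuclideanSpace ℝ (Fin n) => χ z * ξ z^2 * (((‖z‖:ℝ)^2)⁻¹))
          =ᶠ[𝓝 y] (fun _ => (0:ℝ)) :=
        (hZopen.eventually_mem hy).mono fun z hz => by simp [hχ0 z hz]
      exact hev.continuousAt
    · have hy0 : y ≠ 0 := hne' y hy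
      have hQne : ((‖y‖:ℝ)^2) ≠ 0 := pow_ne_zero 2 (norm_ne_zero_iff.2 hy0)
      exact ((hχcont.continuousAt.mul ((hξ.continuous.pow 2).continuousAt)).mul
        (((continuous_norm.pow 2).continuousAt).inv₀ hQne))
  have hsuppQi : HasCompactSupport (fun x : EuclideanSpace ℝ (Fin n) =>
      χ x * ξ x^2 * (((‖x‖:ℝ)^2)⁻¹)) :=
    HasCompactSupport.intro hcs fun y hy => by simp [image_eq_zero_of_notMem_tsupport hy]
  have hI1 : Integrable (fun x : EuclideanSpace ℝ (Fin n) =>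
      χ x * ξ x^2 * (((‖x‖:ℝ)^2)⁻¹)) volume :=
    hcontQi.integrable_of_hasCompactSupport hsuppQi
  have hgradcont : Continuous (fun x : EuclideanSpace ℝ (Fin n) => gradient ξ x) := by
    have heq : (fun x : EuclideanSpace ℝ (Fin n) => gradient ξ x)
        = fun x => (InnerProductSpace.toDual ℝ (EuclideanSpace ℝ (Fin n))).symm
            (fderiv ℝ ξ x) := rfl
    rw [heq]
    exact (InnerProductSpace.toDual ℝ (EuclideanSpace ℝ (Fin n))).symm.continuous.comp
      (hξ.continuous_fderiv (by simp))
  have hgrad0 : ∀ y, y ∉ tsupport ξ → gradient ξ y = 0 := by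
    intro y hy
    have hEv : ξ =ᶠ[𝓝 y] (fun _ => (0:ℝ)) :=
      ((isClosed_tsupport ξ).isOpen_compl.eventually_mem hy).mono fun z hz =>
        image_eq_zero_of_notMem_tsupport hz
    rw [hEv.gradient_eq, gradient_fun_const]
  have hI3 : Integrable (fun x : EuclideanSpace ℝ (Fin n) => ‖gradient ξ x‖^2) volume := by
    refine ((hgradcont.norm.pow 2).integrable_of_hasCompactSupport ?_)
    exact HasCompactSupport.intro hcs fun y hy => by simp [hgrad0 y hy]
  have hI2 : Integrable (fun x : EuclideanSpace ℝ (Fin n) =>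
      χ x * ‖gradient ξ x‖^2) volume := by
    refine ((hχcont.mul (hgradcont.norm.pow 2)).integrable_of_hasCompactSupport ?_)
    exact HasCompactSupport.intro hcs fun y hy => by simp [hgrad0 y hy]
  have hID : Integrable (fun x : EuclideanSpace ℝ (Fin n) =>
      ∑ i : Fin n, fderiv ℝ (F i) x (EuclideanSpace.single i 1)) volume :=
    integrable_finset_sum _ fun i _ => aux_integrable_fderiv_apply (hFsmooth i) (hFsupp i) _
  calc lam^2 * ∫ x : EuclideanSpace ℝ (Fin n), χ x * ξ x^2 * (((‖x‖:ℝ)^2)⁻¹)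
      = ∫ x : EuclideanSpace ℝ (Fin n), lam^2 * (χ x * ξ x^2 * (((‖x‖:ℝ)^2)⁻¹)) :=
        (integral_const_mul _ _).symm
    _ ≤ ∫ x : EuclideanSpace ℝ (Fin n), (χ x * ‖gradient ξ x‖^2
          + ∑ i : Fin n, fderiv ℝ (F i) x (EuclideanSpace.single i 1)) :=
        integral_mono (hI1.const_mul _) (hI2.add hID) hpt
    _ = (∫ x : EuclideanSpace ℝ (Fin n), χ x * ‖gradient ξ x‖^2)
          + ∫ x : EuclideanSpace ℝ (Fin n), ∑ i : Fin n,
            fderiv ℝ (F i) x (EuclideanSpace.single i 1) := integral_add hI2 hID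
    _ = ∫ x : EuclideanSpace ℝ (Fin n), χ x * ‖gradient ξ x‖^2 := by rw [hdiv, add_zero]
    _ ≤ ∫ x : EuclideanSpace ℝ (Fin n), ‖gradient ξ x‖^2 := by
        refine integral_mono hI2 hI3 fun x => ?_
        exact mul_le_of_le_one_left (sq_nonneg _) (Real.smoothTransition.le_one _)

lemma part_two (hn : 3 ≤ n) {p : ℝ} (hp : 0 < p)
    (hN : 2 + 4 * p / (1 + p) + 4 * Real.sqrt (p / (1 + p)) ≤ (n:ℝ))
    (ξ : E → ℝ) (hξ : ContDiff ℝ (⊤:ℕ∞) ξ) (hcs : HasCompactSupport ξ)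
    (hsupp : tsupport ξ ⊆ ball (0:E) 1) :
    (2 * p / (1 + p)) * (2 / (1 + p) + (n:ℝ) - 2) *
        ∫ x in ball (0 : E) 1, ξ x ^ 2 * ‖x‖ ^ (-(2:ℝ)) ≤
      ∫ x in ball (0 : E) 1, ‖gradient ξ x‖ ^ 2 := by
  have hp1 : (0:ℝ) < 1 + p := by linarith
  have hn3 : (3:ℝ) ≤ (n:ℝ) := by exact_mod_cast hn
  haveI hne : Nonempty (Fin n) := ⟨⟨0, by omega⟩⟩
  haveI hnt : Nontrivial (EuclideanSpace ℝ (Fin n)) :=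
    ⟨EuclideanSpace.single (Classical.arbitrary (Fin n)) (1:ℝ), 0, by
      intro h
      have := congrArg (fun z => z (Classical.arbitrary (Fin n))) h
      simpa using this⟩
  -- constant comparison
  have hKle : (2 * p / (1 + p)) * (2 / (1 + p) + (n:ℝ) - 2) ≤ (((n:ℝ)-2)/2)^2 := by
    set s : ℝ := Real.sqrt (p / (1 + p)) with hs
    have hs0 : 0 ≤ s := Real.sqrt_nonneg _
    have hs2 : s^2 = p / (1 + p) := Real.sq_sqrt (by positivity)
    have hA : 2 * p / (1 + p) = 2 * s^2 := by rw [hs2]; ring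
    have hB : 2 / (1 + p) = 2 - 2 * s^2 := by
      rw [hs2]
      field_simp
      ring
    rw [hA, hB]
    have hNs : 2 + 4 * s^2 + 4 * s ≤ (n:ℝ) := by
      rw [hs2]
      have : 4 * (p / (1+p)) = 4 * p / (1+p) := by ring
      linarith [hN, this]
    have hfac1 : 0 ≤ (n:ℝ) - 2 - 4*s^2 - 4*s := by linarith
    have hfac2 : 0 ≤ (n:ℝ) - 2 - 4*s^2 + 4*s := by linarith
    nlinarith [mul_nonneg hfac1 hfac2]
  -- bound for ξ
  obtain ⟨x₀, hx₀⟩ : ∃ x₀, ∀ y, |ξ y| ≤ |ξ x₀| := by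
    have habs : Continuous fun y : EuclideanSpace ℝ (Fin n) => |ξ y| := hξ.continuous.abs
    have habss : HasCompactSupport fun y : EuclideanSpace ℝ (Fin n) => |ξ y| := by
      have := hcs.comp_left (g := fun r : ℝ => |r|) abs_zero
      exact this
    exact habs.exists_forall_ge_of_hasCompactSupport habss
  set M : ℝ := |ξ x₀| with hM
  have hξsq : ∀ x, ξ x ^ 2 ≤ M^2 := by
    intro x
    have h := hx₀ x
    have h2 := abs_nonneg (ξ x)
    nlinarith [sq_abs (ξ x)]
  -- integrable dominating function
  have hIbound : IntegrableOn (fun x : EuclideanSpace ℝ (Fin n) => M^2 * ‖x‖ ^ (-(2:ℝ)))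
      (ball (0:E) 1) volume := (aux_kernel_integrable hn).const_mul _
  set Qi : EuclideanSpace ℝ (Fin n) → ℝ := fun x => ((‖x‖:ℝ)^2)⁻¹ with hQidef
  set C : ℕ → EuclideanSpace ℝ (Fin n) → ℝ :=
    fun k x => Real.smoothTransition (((k:ℝ)+1) * ‖x‖^2 - 1) * ξ x^2 * Qi x with hCdef
  have hCmeas : ∀ k : ℕ, AEStronglyMeasurable (C k) (volume.restrict (ball (0:E) 1)) := by
    intro k
    refine (((Real.smoothTransition.continuous.comp (by fun_prop)).measurable.mul
      ((hξ.continuous.pow 2).measurable)).mul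
      ((measurable_norm.pow_const 2).inv)).aestronglyMeasurable.restrict
  have hCbound : ∀ k : ℕ, ∀ x : EuclideanSpace ℝ (Fin n), ‖C k x‖ ≤ M^2 * ‖x‖ ^ (-(2:ℝ)) := by
    intro k x
    have hst0 : 0 ≤ Real.smoothTransition (((k:ℝ)+1) * ‖x‖^2 - 1) :=
      Real.smoothTransition.nonneg _
    have hst1 : Real.smoothTransition (((k:ℝ)+1) * ‖x‖^2 - 1) ≤ 1 :=
      Real.smoothTransition.le_one _
    have hQi0 : 0 ≤ Qi x := by positivity
    rw [Real.norm_eq_abs, abs_of_nonneg (by positivity), aux_rpow_eq]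
    have h1 : Real.smoothTransition (((k:ℝ)+1) * ‖x‖^2 - 1) * ξ x^2 ≤ M^2 :=
      le_trans (mul_le_of_le_one_left (sq_nonneg _) hst1) (hξsq x)
    exact mul_le_mul_of_nonneg_right h1 hQi0
  have hIlim : IntegrableOn (fun x : EuclideanSpace ℝ (Fin n) => ξ x ^2 * Qi x)
      (ball (0:E) 1) volume := by
    refine Integrable.mono' hIbound ?_ ?_
    · exact (((hξ.continuous.pow 2).measurable).mul
        ((measurable_norm.pow_const 2).inv)).aestronglyMeasurable.restrict
    · filter_upwards with x
      rw [Real.norm_eq_abs, abs_of_nonneg (by positivity), aux_rpow_eq]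
      exact mul_le_mul_of_nonneg_right (hξsq x) (by positivity)
  have h0ae : ∀ᵐ x ∂(volume.restrict (ball (0:E) 1)), x ≠ (0:EuclideanSpace ℝ (Fin n)) := by
    refine ae_restrict_of_ae ?_
    have hzero : {x : EuclideanSpace ℝ (Fin n) | ¬ x ≠ 0} = {0} := by ext z; simp
    rw [ae_iff, hzero]
    exact measure_singleton 0
  have htend : Tendsto (fun k => ∫ x in ball (0:E) 1, C k x) atTop
      (𝓝 (∫ x in ball (0:E) 1, ξ x ^2 * Qi x)) := by
    refine tendsto_integral_of_dominated_convergence _ hCmeas hIbound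
      (fun k => Eventually.of_forall (fun x => hCbound k x)) ?_
    filter_upwards [h0ae] with x hx
    have hQpos : (0:ℝ) < ‖x‖^2 := pow_pos (norm_pos_iff.2 hx) 2
    have hev : ∀ᶠ k : ℕ in atTop, C k x = ξ x ^2 * Qi x := by
      filter_upwards [eventually_ge_atTop ⌈2 / ‖x‖^2⌉₊] with k hk
      have hk1 : 2 / ‖x‖^2 ≤ (k:ℝ) := le_trans (Nat.le_ceil _) (by exact_mod_cast hk)
      have h2 : 2 ≤ ((k:ℝ)+1) * ‖x‖^2 := by
        have := (div_le_iff₀ hQpos).1 hk1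
        nlinarith
      have : Real.smoothTransition (((k:ℝ)+1) * ‖x‖^2 - 1) = 1 :=
        Real.smoothTransition.one_of_one_le (by linarith)
      simp [hCdef, this]
    exact Tendsto.congr' (hev.mono fun k hk => hk.symm) tendsto_const_nhds
  -- gradient vanishing outside support
  have hgrad0 : ∀ y, y ∉ tsupport ξ → gradient ξ y = 0 := by
    intro y hy
    have hEv : ξ =ᶠ[𝓝 y] (fun _ => (0:ℝ)) :=
      ((isClosed_tsupport ξ).isOpen_compl.eventually_mem hy).mono fun z hz =>
        image_eq_zero_of_notMem_tsupport hz
    rw [hEv.gradient_eq, gradient_fun_const]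
  have hsetg : ∫ x in ball (0:E) 1, ‖gradient ξ x‖^2 =
      ∫ x : EuclideanSpace ℝ (Fin n), ‖gradient ξ x‖^2 := by
    refine setIntegral_eq_integral_of_forall_compl_eq_zero fun x hx => ?_
    rw [hgrad0 x (fun hmem => hx (hsupp hmem))]
    simp
  have hsetk : ∀ k : ℕ, ∫ x in ball (0:E) 1, C k x = ∫ x : EuclideanSpace ℝ (Fin n), C k x := by
    intro k
    refine setIntegral_eq_integral_of_forall_compl_eq_zero fun x hx => ?_
    have : ξ x = 0 := image_eq_zero_of_notMem_tsupport (fun hmem => hx (hsupp hmem))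
    simp [hCdef, this]
  have hperk : ∀ k : ℕ, (((n:ℝ)-2)/2)^2 * ∫ x in ball (0:E) 1, C k x
      ≤ ∫ x in ball (0:E) 1, ‖gradient ξ x‖^2 := by
    intro k
    rw [hsetk, hsetg]
    exact aux_core hn hξ hcs (t := (k:ℝ)+1) (by positivity)
  have hlim2 : (((n:ℝ)-2)/2)^2 * ∫ x in ball (0:E) 1, ξ x ^2 * Qi x
      ≤ ∫ x in ball (0:E) 1, ‖gradient ξ x‖^2 :=
    le_of_tendsto (htend.const_mul ((((n:ℝ)-2)/2)^2)) (Eventually.of_forall hperk)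
  -- final chain
  have hInn : 0 ≤ ∫ x in ball (0:E) 1, ξ x ^2 * Qi x :=
    setIntegral_nonneg measurableSet_ball fun x _ => by positivity
  have hrw : ∫ x in ball (0:E) 1, ξ x ^ 2 * ‖x‖ ^ (-(2:ℝ))
      = ∫ x in ball (0:E) 1, ξ x ^2 * Qi x := by
    simp only [aux_rpow_eq, hQidef]
  rw [hrw]
  calc (2 * p / (1 + p)) * (2 / (1 + p) + (n:ℝ) - 2) * ∫ x in ball (0:E) 1, ξ x ^2 * Qi x
      ≤ (((n:ℝ)-2)/2)^2 * ∫ x in ball (0:E) 1, ξ x ^2 * Qi x :=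
        mul_le_mul_of_nonneg_right hKle hInn
    _ ≤ ∫ x in ball (0:E) 1, ‖gradient ξ x‖^2 := hlim2

end aux

/-- The explicit singular solution `u_p(x) = 1 - |x|^{2/(1+p)}` in `B₁ ⊂ ℝⁿ`,
`n ≥ 3`, `p > 0`, with `A = (2/(1+p))(2/(1+p)+n-2)`:
(i) away from the origin `u_p` is smooth and solves `-Δu_p = A(1-u_p)^{-p}`, with
`f'(u_p(x)) = A·p·(1-u_p(x))^{-p-1} = (2p/(1+p))(2/(1+p)+n-2)|x|^{-2}`;
(ii) if `n ≥ N(p) = 2 + 4p/(1+p) + 4√(p/(1+p))`, then `u_p` is stable, i.e.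
`(2p/(1+p))(2/(1+p)+n-2) ∫_{B₁} ξ²|x|^{-2} ≤ ∫_{B₁} |∇ξ|²` for all `ξ ∈ C^∞_c(B₁)`. -/
theorem stmt19 (n : ℕ) (hn : 3 ≤ n) (p : ℝ) (hp : 0 < p) :
    (∀ x ∈ ball (0 : EuclideanSpace ℝ (Fin n)) 1, x ≠ 0 →
      ContDiffAt ℝ (⊤:ℕ∞) (fun y : EuclideanSpace ℝ (Fin n) => 1 - ‖y‖ ^ (2 / (1 + p))) x ∧
      -lap (fun y : EuclideanSpace ℝ (Fin n) => 1 - ‖y‖ ^ (2 / (1 + p))) x =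
        (2 / (1 + p)) * (2 / (1 + p) + (n:ℝ) - 2) *
          (1 - (1 - ‖x‖ ^ (2 / (1 + p)))) ^ (-p) ∧
      (2 / (1 + p)) * (2 / (1 + p) + (n:ℝ) - 2) * p *
          (1 - (1 - ‖x‖ ^ (2 / (1 + p)))) ^ (-(p + 1)) =
        (2 * p / (1 + p)) * (2 / (1 + p) + (n:ℝ) - 2) * ‖x‖ ^ (-(2:ℝ))) ∧
    (2 + 4 * p / (1 + p) + 4 * Real.sqrt (p / (1 + p)) ≤ (n:ℝ) →
      ∀ ξ : EuclideanSpace ℝ (Fin n) → ℝ, ContDiff ℝ (⊤:ℕ∞) ξ → HasCompactSupport ξ →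
        tsupport ξ ⊆ ball (0 : EuclideanSpace ℝ (Fin n)) 1 →
        (2 * p / (1 + p)) * (2 / (1 + p) + (n:ℝ) - 2) *
            ∫ x in ball (0 : EuclideanSpace ℝ (Fin n)) 1, ξ x ^ 2 * ‖x‖ ^ (-(2:ℝ)) ≤
          ∫ x in ball (0 : EuclideanSpace ℝ (Fin n)) 1, ‖gradient ξ x‖ ^ 2) := by
  exact ⟨fun x _hx hx0 => part_one hn p hp x hx0,
    fun hN ξ hξ hcs hsupp => part_two hn hp hN ξ hξ hcs hsupp⟩
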